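/- Let c₁, c₂, c₃ be real numbers with c₁ + c₂ + c₃ = c₁·c₂·c₃. Then 1 + 2/(c₁²+1) + 2/(c₂²+1) + 2/(c₃²+1) ≥ 5/2. (First inequality of Lemma 5.17) -/

import Mathlib

/-- **first inequality of Lemma 5.17.** If `c₁ + c₂ + c₃ = c₁c₂c₃`,
then `1 + 2/(c₁²+1) + 2/(c₂²+1) + 2/(c₃²+1) ≥ 5/2`. -/
theorem trace_inv_ge_five_halves (c₁ c₂ c₃ : ℝ) (h : c₁ + c₂ + c₃ = c₁ * c₂ * c₃) :
    (5 : ℝ) / 2 ≤ 1 + 2 / (c₁ ^ 2 + 1) + 2 / (c₂ ^ 2 + 1) + 2 / (c₃ ^ 2 + 1) := by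
  have h1 : (0:ℝ) < c₁ ^ 2 + 1 := by positivity
  have h2 : (0:ℝ) < c₂ ^ 2 + 1 := by positivity
  have h3 : (0:ℝ) < c₃ ^ 2 + 1 := by positivity
  have key : (0:ℝ) ≤ (c₃ ^ 2 + 1) * ((3 - c₁ * c₂) ^ 2 + (c₁ - c₂) ^ 2) := by positivity
  have hgl : (c₁ + c₂ + c₃ - c₁ * c₂ * c₃) * (c₁ + c₂ - c₃ + c₁ * c₂ * c₃) = 0 := by
    rw [show c₁ + c₂ + c₃ - c₁ * c₂ * c₃ = 0 from by linarith, zero_mul]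
  have Dpos : (0:ℝ) < (c₁ ^ 2 + 1) * ((c₂ ^ 2 + 1) * (c₃ ^ 2 + 1)) := by positivity
  have main : (5:ℝ) / 2 * ((c₁ ^ 2 + 1) * ((c₂ ^ 2 + 1) * (c₃ ^ 2 + 1))) ≤
      (1 + 2 / (c₁ ^ 2 + 1) + 2 / (c₂ ^ 2 + 1) + 2 / (c₃ ^ 2 + 1)) *
        ((c₁ ^ 2 + 1) * ((c₂ ^ 2 + 1) * (c₃ ^ 2 + 1))) := by
    have expand : (1 + 2 / (c₁ ^ 2 + 1) + 2 / (c₂ ^ 2 + 1) + 2 / (c₃ ^ 2 + 1)) *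
        ((c₁ ^ 2 + 1) * ((c₂ ^ 2 + 1) * (c₃ ^ 2 + 1))) =
        (c₁ ^ 2 + 1) * ((c₂ ^ 2 + 1) * (c₃ ^ 2 + 1)) +
          2 * ((c₂ ^ 2 + 1) * (c₃ ^ 2 + 1)) + 2 * ((c₁ ^ 2 + 1) * (c₃ ^ 2 + 1)) +
          2 * ((c₁ ^ 2 + 1) * (c₂ ^ 2 + 1)) := by
      field_simp
    rw [expand]
    nlinarith [key, hgl]
  exact (mul_le_mul_iff_of_pos_right Dpos).mp main
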